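/- Let p be a prime, s ≥ 1, F_q a finite field of characteristic p, γ ∈ F_q nonzero, and n ≥ 1. Let m and β be integers with 1 ≤ β ≤ p-2 and 0 ≤ m < p^s - βp^{s-1} - 1. Then the Hamming weight of (x^n + γ)^{m + βp^{s-1} + 1} in F_q[x] is at least β + 2. -/

import Mathlib

open Polynomial

lemma lucas_digit (p : ℕ) [Fact p.Prime] :
    ∀ t a b r : ℕ, r < p ^ t →
      ((a * p ^ t + r).choose (b * p ^ t) : ZMod p) = ((a.choose b : ℕ) : ZMod p) := by
  intro t
  induction t with
  | zero =>
    intro a b r hr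
    simp only [pow_zero, Nat.lt_one_iff] at hr
    subst hr
    simp
  | succ t ih =>
    intro a b r hr
    have hp : 0 < p := (Fact.out : p.Prime).pos
    have key := Choose.choose_modEq_choose_mod_mul_choose_div
      (p := p) (n := a * p ^ (t + 1) + r) (k := b * p ^ (t + 1))
    have e1 : a * p ^ (t + 1) + r = p * (a * p ^ t) + r := by ring
    have e2 : b * p ^ (t + 1) = p * (b * p ^ t) := by ring
    have h1 : (a * p ^ (t + 1) + r) % p = r % p := by rw [e1, Nat.mul_add_mod]
    have h2 : (a * p ^ (t + 1) + r) / p = a * p ^ t + r / p := by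
      rw [e1, Nat.mul_add_div hp]
    have h3 : (b * p ^ (t + 1)) % p = 0 := by rw [e2, Nat.mul_mod_right]
    have h4 : (b * p ^ (t + 1)) / p = b * p ^ t := by
      rw [e2, Nat.mul_div_cancel_left _ hp]
    rw [h1, h2, h3, h4] at key
    have key' : ((a * p ^ (t + 1) + r).choose (b * p ^ (t + 1)) : ZMod p)
        = (((r % p).choose 0 * (a * p ^ t + r / p).choose (b * p ^ t) : ℕ) : ZMod p) := by
      have := (ZMod.intCast_eq_intCast_iff _ _ _).mpr key
      push_cast at this ⊢
      exact_mod_cast this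
    have hrp : r / p < p ^ t := by
      rw [Nat.div_lt_iff_lt_mul hp]
      calc r < p ^ (t + 1) := hr
        _ = p ^ t * p := by ring
    rw [key', Nat.choose_zero_right, one_mul, ih a b (r / p) hrp]

lemma card_support_expand {R : Type*} [CommSemiring R] (n : ℕ) (hn : 0 < n) (f : R[X]) :
    ((expand R n f).support).card = f.support.card := by
  have hsupp : (expand R n f).support = f.support.image (fun i => n * i) := by
    ext k
    simp only [mem_support_iff, Polynomial.coeff_expand hn, Finset.mem_image]
    constructor
    · intro h
      by_cases hdvd : n ∣ k
      · rw [if_pos hdvd] at h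
        exact ⟨k / n, h, Nat.mul_div_cancel' hdvd⟩
      · rw [if_neg hdvd] at h
        exact absurd rfl h
    · rintro ⟨i, hi, rfl⟩
      rw [if_pos (Dvd.intro i rfl), Nat.mul_div_cancel_left _ hn]
      exact hi
  rw [hsupp, Finset.card_image_of_injective _ (mul_right_injective₀ hn.ne')]

theorem stmt_8 (p s : ℕ) (hp : p.Prime) (hs : 1 ≤ s)
    (F : Type*) [Field F] [Fintype F] [CharP F p]
    (γ : F) (hγ : γ ≠ 0) (n : ℕ) (hn : 1 ≤ n)
    (m β : ℕ) (hβ1 : 1 ≤ β) (hβ2 : β ≤ p - 2)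
    (hm : m < p ^ s - β * p ^ (s - 1) - 1) :
    β + 2 ≤ ((X ^ n + C γ) ^ (m + β * p ^ (s - 1) + 1) : F[X]).support.card := by
  haveI : Fact p.Prime := ⟨hp⟩
  set t := s - 1 with ht
  set P := p ^ t with hP
  have hP0 : 0 < P := pow_pos hp.pos t
  set N := m + β * P + 1 with hN
  -- reduce to n = 1 via expand
  have hexp : ((X ^ n + C γ) ^ N : F[X]) = expand F n ((X + C γ) ^ N) := by
    rw [map_pow, map_add, expand_X, expand_C]
  rw [hexp, card_support_expand n hn]
  -- basic numerics
  have hst : s = t + 1 := by omega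
  have hps : p ^ s = P * p := by rw [hst, pow_succ, hP]
  have hNlt : N < P * p := by
    rw [← hps]
    omega
  set d := N / P with hd
  set r := N % P with hr
  have hNdr : d * P + r = N := by rw [hd, hr, mul_comm]; exact Nat.div_add_mod N P
  have hrP : r < P := Nat.mod_lt _ hP0
  have hdp : d < p := by
    rw [hd, Nat.div_lt_iff_lt_mul hP0]
    calc N < P * p := hNlt
      _ = p * P := by ring
  have hβd : β ≤ d := by
    rw [hd, Nat.le_div_iff_mul_le hP0]
    omega
  -- coefficient facts
  have hcoeff : ∀ k, (((X + C γ) ^ N : F[X])).coeff k = γ ^ (N - k) * (N.choose k : F) :=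
    fun k => coeff_X_add_C_pow γ N k
  have hchoose : ∀ j, j ≤ d → (N.choose (j * P) : F) ≠ 0 := by
    intro j hj hzero
    have hdvd : p ∣ N.choose (j * P) := (CharP.cast_eq_zero_iff F p _).mp hzero
    have hzmod : ((N.choose (j * P) : ℕ) : ZMod p) = ((d.choose j : ℕ) : ZMod p) := by
      have := lucas_digit p t d j r hrP
      rwa [hNdr] at this
    have hdvd' : p ∣ d.choose j := by
      have : ((d.choose j : ℕ) : ZMod p) = 0 := by
        rw [← hzmod, ZMod.natCast_eq_zero_iff]
        exact hdvd
      exact (ZMod.natCast_eq_zero_iff _ _).mp this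
    have hfac : p ∣ d.factorial := by
      have := Nat.choose_mul_factorial_mul_factorial hj
      exact this ▸ Dvd.dvd.mul_right (Dvd.dvd.mul_right hdvd' _) _
    exact absurd ((Nat.Prime.dvd_factorial hp).mp hfac) (by omega)
  -- the finset of indices
  set S : Finset ℕ := (Finset.range (d + 1)).image (fun j => j * P) ∪ {N} with hS
  have hsub : S ⊆ ((X + C γ) ^ N : F[X]).support := by
    intro k hk
    rw [mem_support_iff]
    rw [hS, Finset.mem_union, Finset.mem_image] at hk
    rcases hk with ⟨j, hj, rfl⟩ | hk
    · rw [Finset.mem_range] at hj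
      rw [hcoeff]
      exact mul_ne_zero (pow_ne_zero _ hγ) (hchoose j (by omega))
    · rw [Finset.mem_singleton] at hk
      subst hk
      rw [hcoeff]
      simp [hγ]
  refine le_trans ?_ (Finset.card_le_card hsub)
  have hinj : Function.Injective (fun j : ℕ => j * P) := mul_left_injective₀ hP0.ne'
  have hcard_img : ((Finset.range (d + 1)).image (fun j => j * P)).card = d + 1 := by
    rw [Finset.card_image_of_injective _ hinj, Finset.card_range]
  by_cases hr0 : r = 0
  · -- then d ≥ β + 1
    have hdβ : β + 1 ≤ d := by
      rcases Nat.lt_or_ge β d with h | h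
      · omega
      · exfalso
        have : d * P ≤ β * P := Nat.mul_le_mul_right P (by omega)
        omega
    calc β + 2 ≤ d + 1 := by omega
      _ = ((Finset.range (d + 1)).image (fun j => j * P)).card := hcard_img.symm
      _ ≤ S.card := Finset.card_le_card (by rw [hS]; exact Finset.subset_union_left)
  · -- N ∉ image
    have hNnot : N ∉ (Finset.range (d + 1)).image (fun j => j * P) := by
      intro hmem
      rw [Finset.mem_image] at hmem
      obtain ⟨j, _, hjN⟩ := hmem
      have : N % P = 0 := by
        rw [← hjN, Nat.mul_mod_left]
      omega
    have : S.card = d + 2 := by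
      rw [hS, Finset.union_comm, ← Finset.insert_eq,
        Finset.card_insert_of_notMem hNnot, hcard_img]
    omega
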